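/- If n > 2 is even, then the group GC_n(𝔽₂) of invertible n×n Christoffel matrices over 𝔽₂ has order 2·φ(n) and is not cyclic: the elements C₁(0,1), C_{n−1}(1,0) and C_{n−1}(0,1) are three distinct elements of order 2. -/

import Mathlib

/-- The `n × n` Christoffel matrix `C_m(a,b)`. -/
def christoffel (n m : ℕ) {R : Type*} (a b : R) : Matrix (Fin n) (Fin n) R :=
  Matrix.of fun i j =>
    if (((i : ℕ) : ZMod n) - (m : ZMod n) * ((j : ℕ) : ZMod n)).val < m then a else b

/-- A matrix is a Christoffel matrix if it equals `C_m(a,b)` for some `m` coprime to `n`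
and distinct `a, b`. -/
def IsChristoffel {R : Type*} (n : ℕ) (M : Matrix (Fin n) (Fin n) R) : Prop :=
  ∃ (m : ℕ) (a b : R), 1 ≤ m ∧ m < n ∧ Nat.Coprime m n ∧ a ≠ b ∧ M = christoffel n m a b

namespace ChristoffelAux

variable {n : ℕ}

def finZMod (n : ℕ) [NeZero n] : Fin n ≃ ZMod n where
  toFun i := ((i : ℕ) : ZMod n)
  invFun x := ⟨x.val, ZMod.val_lt x⟩
  left_inv i := by ext; simp [ZMod.val_natCast, Nat.mod_eq_of_lt i.isLt]
  right_inv x := by simp [ZMod.natCast_val, ZMod.cast_id]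

lemma finZMod_apply [NeZero n] (i : Fin n) : finZMod n i = ((i : ℕ) : ZMod n) := rfl

lemma cast_inj [NeZero n] {i j : Fin n} : ((i : ℕ) : ZMod n) = ((j : ℕ) : ZMod n) ↔ i = j :=
  (finZMod n).injective.eq_iff

lemma val_eq_iff [NeZero n] (x : ZMod n) (c : ℕ) (hc : c < n) :
    x = (c : ZMod n) ↔ x.val = c := by
  constructor
  · rintro rfl; exact ZMod.val_cast_of_lt hc
  · intro h; rw [← h, ZMod.natCast_val, ZMod.cast_id]

lemma sum_cond [NeZero n] (c : ZMod n) (f : Fin n → ZMod 2) :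
    ∑ j : Fin n, (if ((j : ℕ) : ZMod n) = c then f j else 0) = f ((finZMod n).symm c) := by
  have h : ∀ j : Fin n, (((j : ℕ) : ZMod n) = c) ↔ j = (finZMod n).symm c := fun j => by
    rw [← finZMod_apply, ← Equiv.eq_symm_apply]
  rw [Finset.sum_congr rfl (fun j _ => if_congr (h j) rfl rfl),
    Finset.sum_ite_eq' Finset.univ ((finZMod n).symm c) f]
  simp

def Jmat (n : ℕ) : Matrix (Fin n) (Fin n) (ZMod 2) := Matrix.of fun _ _ => 1

lemma add_self_mat (M : Matrix (Fin n) (Fin n) (ZMod 2)) : M + M = 0 := by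
  ext i j
  have : ∀ x : ZMod 2, x + x = 0 := by decide
  simpa using this (M i j)

lemma J_mul_J (hne : Even n) : Jmat n * Jmat n = 0 := by
  ext i k
  rw [Matrix.mul_apply]
  have : ∀ j : Fin n, Jmat n i j * Jmat n j k = 1 := fun j => by simp [Jmat]
  rw [Finset.sum_congr rfl (fun j _ => this j)]
  simp only [Finset.sum_const, Finset.card_univ, Fintype.card_fin, nsmul_eq_mul, mul_one]
  obtain ⟨r, hr⟩ := hne
  rw [Matrix.zero_apply, hr]
  push_cast
  ring_nf
  rw [show ((2 : ZMod 2)) = 0 by decide]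
  ring

lemma mul_J_of_rowsum {M : Matrix (Fin n) (Fin n) (ZMod 2)} (h : ∀ i, ∑ k, M i k = 1) :
    M * Jmat n = Jmat n := by
  ext i k
  rw [Matrix.mul_apply]
  have : ∀ j : Fin n, M i j * Jmat n j k = M i j := fun j => by simp [Jmat]
  rw [Finset.sum_congr rfl (fun j _ => this j), h i]
  rfl

lemma J_mul_of_colsum {M : Matrix (Fin n) (Fin n) (ZMod 2)} (h : ∀ k, ∑ i, M i k = 1) :
    Jmat n * M = Jmat n := by
  ext i k
  rw [Matrix.mul_apply]
  have : ∀ j : Fin n, Jmat n i j * M j k = M j k := fun j => by simp [Jmat]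
  rw [Finset.sum_congr rfl (fun j _ => this j), h k]
  rfl

lemma christoffel_swap (m : ℕ) :
    christoffel n m (1 : ZMod 2) 0 = Jmat n + christoffel n m (0 : ZMod 2) 1 := by
  ext i j
  show (if (((i : ℕ) : ZMod n) - (m : ZMod n) * ((j : ℕ) : ZMod n)).val < m then (1 : ZMod 2)
      else 0)
    = Jmat n i j
      + (if (((i : ℕ) : ZMod n) - (m : ZMod n) * ((j : ℕ) : ZMod n)).val < m then (0 : ZMod 2)
        else 1)
  rw [show Jmat n i j = 1 from rfl]
  split <;> decide

lemma sum_ite_val [NeZero n] (m : ℕ) (hm : m ≤ n) (φ : Fin n → ZMod n)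
    (hφ : Function.Bijective φ) :
    ∑ j : Fin n, (if (φ j).val < m then (0 : ZMod 2) else 1) = ((n - m : ℕ) : ZMod 2) := by
  have h1 : ∑ j : Fin n, (if (φ j).val < m then (0 : ZMod 2) else 1)
      = ∑ x : ZMod n, (if x.val < m then (0 : ZMod 2) else 1) :=
    Fintype.sum_bijective φ hφ _ _ (fun j => rfl)
  have h2 : ∑ x : ZMod n, (if x.val < m then (0 : ZMod 2) else 1)
      = ∑ i : Fin n, (if (i : ℕ) < m then (0 : ZMod 2) else 1) := by
    rw [← Equiv.sum_comp (finZMod n) (fun x : ZMod n => if x.val < m then (0 : ZMod 2) else 1)]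
    refine Finset.sum_congr rfl (fun i _ => ?_)
    have : ((finZMod n) i).val = (i : ℕ) := by
      simp [finZMod, ZMod.val_natCast, Nat.mod_eq_of_lt i.isLt]
    rw [this]
  rw [h1, h2, Fin.sum_univ_eq_sum_range (fun k => if k < m then (0 : ZMod 2) else 1)]
  rw [Finset.sum_ite, Finset.sum_const, Finset.sum_const]
  have h3 : ((Finset.range n).filter (fun k => ¬ k < m)).card = n - m := by
    have : (Finset.range n).filter (fun k => ¬ k < m) = Finset.Ico m n := by
      ext k; simp [Finset.mem_Ico]; omega
    rw [this, Nat.card_Ico]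
  simp only [smul_zero, zero_add, smul_eq_mul, mul_one]
  rw [h3, nsmul_eq_mul, mul_one]

lemma bij_row [NeZero n] {m : ℕ} (hu : IsUnit ((m : ℕ) : ZMod n)) (c : ZMod n) :
    Function.Bijective (fun k : Fin n => c - (m : ZMod n) * ((k : ℕ) : ZMod n)) := by
  rw [Fintype.bijective_iff_injective_and_card]
  refine ⟨fun k k' h => ?_, by simp [ZMod.card]⟩
  simp only [sub_right_injective.eq_iff] at h
  exact cast_inj.mp (hu.mul_left_cancel h)

lemma bij_col [NeZero n] (c : ZMod n) :
    Function.Bijective (fun i : Fin n => ((i : ℕ) : ZMod n) - c) := by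
  rw [Fintype.bijective_iff_injective_and_card]
  refine ⟨fun k k' h => ?_, by simp [ZMod.card]⟩
  exact cast_inj.mp (by simpa using h)

lemma rowsum [NeZero n] {m : ℕ} (hm : m ≤ n) (hu : IsUnit ((m : ℕ) : ZMod n)) (i : Fin n) :
    ∑ k : Fin n, christoffel n m (0 : ZMod 2) 1 i k = ((n - m : ℕ) : ZMod 2) :=
  sum_ite_val m hm _ (bij_row hu _)

lemma colsum [NeZero n] {m : ℕ} (hm : m ≤ n) (k : Fin n) :
    ∑ i : Fin n, christoffel n m (0 : ZMod 2) 1 i k = ((n - m : ℕ) : ZMod 2) :=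
  sum_ite_val m hm _ (bij_col _)

lemma flip {m : ℕ} (hn1 : 1 < n) (hm1 : 1 ≤ m) (hm : m < n) (x : ZMod n) :
    (if (x + 1).val < m then (0 : ZMod 2) else 1) + (if x.val < m then (0 : ZMod 2) else 1)
      = (if x = ((m - 1 : ℕ) : ZMod n) then 1 else 0)
        + (if x = ((n - 1 : ℕ) : ZMod n) then 1 else 0) := by
  haveI : NeZero n := ⟨by omega⟩
  haveI : Fact (1 < n) := ⟨hn1⟩
  have hv1 := val_eq_iff x (m - 1) (by omega)
  have hv2 := val_eq_iff x (n - 1) (by omega)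
  simp only [hv1, hv2]
  have hv : (x + 1).val = (x.val + 1) % n := by
    rw [ZMod.val_add, ZMod.val_one]
  have hx : x.val < n := ZMod.val_lt x
  rw [hv]
  rcases eq_or_ne x.val (n - 1) with h | h
  · have h2 : x.val + 1 = n := by omega
    rw [h2, Nat.mod_self]
    split_ifs <;> first | rfl | decide | (exfalso; omega)
  · have h2 : (x.val + 1) % n = x.val + 1 := Nat.mod_eq_of_lt (by omega)
    rw [h2]
    split_ifs <;> first | rfl | decide | (exfalso; omega)

lemma key [NeZero n] {m m' : ℕ} (hn1 : 1 < n) (hm1 : 1 ≤ m) (hm : m < n)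
    (hm'1 : 1 ≤ m') (hm' : m' < n)
    (hmm' : ((m : ℕ) : ZMod n) * ((m' : ℕ) : ZMod n) = 1) (i k : Fin n) :
    (christoffel n m (0 : ZMod 2) 1 * christoffel n m' (0 : ZMod 2) 1) (i + 1) k
      + (christoffel n m (0 : ZMod 2) 1 * christoffel n m' (0 : ZMod 2) 1) i k
    = (if i + 1 = k then 1 else 0) + (if i = k then 1 else 0) := by
  set A := christoffel n m (0 : ZMod 2) 1 with hA
  set B := christoffel n m' (0 : ZMod 2) 1 with hB
  have hone : ((1 : Fin n) : ℕ) = 1 := by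
    rw [Fin.val_one']; exact Nat.mod_eq_of_lt hn1
  have hcast : (((i + 1 : Fin n) : ℕ) : ZMod n) = ((i : ℕ) : ZMod n) + 1 := by
    have h1 : ((i + 1 : Fin n) : ℕ) = ((i : ℕ) + 1) % n := by
      rw [Fin.val_add, hone]
    rw [h1, ZMod.natCast_mod, Nat.cast_add, Nat.cast_one]
  have hu' : IsUnit ((m' : ℕ) : ZMod n) := IsUnit.of_mul_eq_one _ (by rw [mul_comm]; exact hmm')
  set c₁ : ZMod n := ((m - 1 : ℕ) : ZMod n) with hc₁
  set c₂ : ZMod n := ((n - 1 : ℕ) : ZMod n) with hc₂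
  have hc₁' : c₁ = (m : ZMod n) - 1 := by
    rw [hc₁, Nat.cast_sub hm1, Nat.cast_one]
  have hc₂' : c₂ = -1 := by
    rw [hc₂, Nat.cast_sub (by omega), Nat.cast_one, ZMod.natCast_self, zero_sub]
  have hrow : ∀ j : Fin n,
      A (i + 1) j + A i j
        = (if ((i : ℕ) : ZMod n) - (m : ZMod n) * ((j : ℕ) : ZMod n) = c₁ then 1 else 0)
          + (if ((i : ℕ) : ZMod n) - (m : ZMod n) * ((j : ℕ) : ZMod n) = c₂ then 1 else 0) := by
    intro j
    set x : ZMod n := ((i : ℕ) : ZMod n) - (m : ZMod n) * ((j : ℕ) : ZMod n) with hx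
    have hxx : (((i + 1 : Fin n) : ℕ) : ZMod n) - (m : ZMod n) * ((j : ℕ) : ZMod n) = x + 1 := by
      rw [hcast, hx]; ring
    have h1 : A (i + 1) j = if (x + 1).val < m then (0 : ZMod 2) else 1 := by
      show (if ((((i + 1 : Fin n) : ℕ) : ZMod n)
          - (m : ZMod n) * ((j : ℕ) : ZMod n)).val < m then (0 : ZMod 2) else 1) = _
      rw [hxx]
    have h2 : A i j = if x.val < m then (0 : ZMod 2) else 1 := rfl
    rw [h1, h2]
    exact flip hn1 hm1 hm x
  set j₁ : Fin n := (finZMod n).symm ((m' : ZMod n) * (((i : ℕ) : ZMod n) - c₁)) with hj₁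
  set j₂ : Fin n := (finZMod n).symm ((m' : ZMod n) * (((i : ℕ) : ZMod n) - c₂)) with hj₂
  have hcond : ∀ (c : ZMod n) (j : Fin n),
      (((i : ℕ) : ZMod n) - (m : ZMod n) * ((j : ℕ) : ZMod n) = c)
        ↔ j = (finZMod n).symm ((m' : ZMod n) * (((i : ℕ) : ZMod n) - c)) := by
    intro c j
    rw [Equiv.eq_symm_apply, finZMod_apply]
    constructor
    · intro h
      have h2 : (m : ZMod n) * ((j : ℕ) : ZMod n) = ((i : ℕ) : ZMod n) - c := by
        rw [← h]; ring
      calc ((j : ℕ) : ZMod n) = ((m' : ℕ) : ZMod n) * ((m : ZMod n) * ((j : ℕ) : ZMod n)) := by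
            rw [← mul_assoc, mul_comm ((m' : ℕ) : ZMod n), hmm', one_mul]
        _ = _ := by rw [h2]
    · intro h
      rw [h, ← mul_assoc, hmm', one_mul]; ring
  have hmul : ∀ i' : Fin n, (A * B) i' k = ∑ j : Fin n, A i' j * B j k := fun _ => Matrix.mul_apply
  rw [hmul, hmul, ← Finset.sum_add_distrib]
  have hsum : ∀ j : Fin n, A (i + 1) j * B j k + A i j * B j k
      = (if j = j₁ then B j k else 0) + (if j = j₂ then B j k else 0) := by
    intro j
    rw [← add_mul, hrow j, add_mul, ite_mul, ite_mul, one_mul, zero_mul,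
      if_congr (hcond c₁ j) rfl rfl, if_congr (hcond c₂ j) rfl rfl]
  rw [Finset.sum_congr rfl (fun j _ => hsum j), Finset.sum_add_distrib,
    Finset.sum_ite_eq' Finset.univ j₁ (fun j => B j k),
    Finset.sum_ite_eq' Finset.univ j₂ (fun j => B j k)]
  simp only [Finset.mem_univ, if_true]
  set w : ZMod n := ((m' : ℕ) : ZMod n) * (((i : ℕ) : ZMod n) + 1 - ((k : ℕ) : ZMod n)) with hw
  have hBj₂ : B j₂ k = if w.val < m' then (0 : ZMod 2) else 1 := by
    have hx2 : ((j₂ : ℕ) : ZMod n) - (m' : ZMod n) * ((k : ℕ) : ZMod n) = w := by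
      have h1 : ((j₂ : ℕ) : ZMod n) = (m' : ZMod n) * (((i : ℕ) : ZMod n) - c₂) := by
        rw [hj₂, ← finZMod_apply, Equiv.apply_symm_apply]
      rw [h1, hc₂', hw]; ring
    show (if (((j₂ : ℕ) : ZMod n) - (m' : ZMod n) * ((k : ℕ) : ZMod n)).val < m'
        then (0 : ZMod 2) else 1) = _
    rw [hx2]
  have hBj₁ : B j₁ k = if (w - 1).val < m' then (0 : ZMod 2) else 1 := by
    have h2 : ((m' : ℕ) : ZMod n) * (m : ZMod n) = 1 := by rw [mul_comm]; exact hmm'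
    have hx1 : ((j₁ : ℕ) : ZMod n) - (m' : ZMod n) * ((k : ℕ) : ZMod n) = w - 1 := by
      have h1 : ((j₁ : ℕ) : ZMod n) = (m' : ZMod n) * (((i : ℕ) : ZMod n) - c₁) := by
        rw [hj₁, ← finZMod_apply, Equiv.apply_symm_apply]
      rw [h1, hc₁', hw]
      calc ((m' : ℕ) : ZMod n) * (((i : ℕ) : ZMod n) - ((m : ZMod n) - 1))
            - (m' : ZMod n) * ((k : ℕ) : ZMod n)
          = ((m' : ℕ) : ZMod n) * (((i : ℕ) : ZMod n) + 1 - ((k : ℕ) : ZMod n))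
            - ((m' : ℕ) : ZMod n) * (m : ZMod n) := by ring
        _ = _ := by rw [h2]
    show (if (((j₁ : ℕ) : ZMod n) - (m' : ZMod n) * ((k : ℕ) : ZMod n)).val < m'
        then (0 : ZMod 2) else 1) = _
    rw [hx1]
  rw [hBj₁, hBj₂]
  have hflip := flip hn1 hm'1 hm' (w - 1)
  rw [sub_add_cancel] at hflip
  rw [add_comm (if (w - 1).val < m' then (0 : ZMod 2) else 1), hflip]
  have e1 : (w - 1 = ((m' - 1 : ℕ) : ZMod n)) ↔ i = k := by
    rw [Nat.cast_sub hm'1, Nat.cast_one, sub_left_inj, hw, ← cast_inj (i := i) (j := k)]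
    constructor
    · intro h
      have h2 : ((i : ℕ) : ZMod n) + 1 - ((k : ℕ) : ZMod n) = 1 := by
        have h3 : ((m : ℕ) : ZMod n) * (((m' : ℕ) : ZMod n)
            * (((i : ℕ) : ZMod n) + 1 - ((k : ℕ) : ZMod n)))
            = ((m : ℕ) : ZMod n) * ((m' : ℕ) : ZMod n) := by rw [h]
        rw [← mul_assoc, hmm', one_mul] at h3
        exact h3
      linear_combination h2
    · intro h
      rw [h]; ring
  have e2 : (w - 1 = ((n - 1 : ℕ) : ZMod n)) ↔ i + 1 = k := by
    rw [← hc₂, hc₂', sub_eq_iff_eq_add, neg_add_cancel, hw,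
      ← cast_inj (i := i + 1) (j := k), hcast]
    constructor
    · intro h
      have h3 : ((m : ℕ) : ZMod n) * (((m' : ℕ) : ZMod n)
          * (((i : ℕ) : ZMod n) + 1 - ((k : ℕ) : ZMod n)))
          = ((m : ℕ) : ZMod n) * 0 := by rw [h]
      rw [← mul_assoc, hmm', one_mul, mul_zero] at h3
      linear_combination h3
    · intro h
      rw [← h]; ring
  rw [if_congr e1 rfl rfl, if_congr e2 rfl rfl, add_comm]

lemma cast_sub_eq_one (hne : Even n) {m : ℕ} (hmo : m % 2 = 1) (hm : m < n) :
    ((n - m : ℕ) : ZMod 2) = 1 := by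
  obtain ⟨r, hr⟩ := hne
  have h2 : (n - m) % 2 = 1 := by omega
  rw [← ZMod.natCast_mod (n - m) 2, h2, Nat.cast_one]

lemma isUnit_det (hn : 2 < n) (hne : Even n) {m : ℕ} (hm1 : 1 ≤ m) (hm : m < n)
    (hcop : Nat.Coprime m n) (a b : ZMod 2) (hab : a ≠ b) :
    IsUnit (christoffel n m a b).det := by
  haveI : NeZero n := ⟨by omega⟩
  haveI : Fact (1 < n) := ⟨by omega⟩
  set u := ZMod.unitOfCoprime m hcop with hu_def
  set m' := ((u⁻¹ : (ZMod n)ˣ) : ZMod n).val with hm'def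
  have hcastm' : ((m' : ℕ) : ZMod n) = ((u⁻¹ : (ZMod n)ˣ) : ZMod n) := by
    rw [hm'def, ZMod.natCast_val, ZMod.cast_id]
  have hmm' : ((m : ℕ) : ZMod n) * ((m' : ℕ) : ZMod n) = 1 := by
    rw [hcastm', ← ZMod.coe_unitOfCoprime m hcop]
    exact u.mul_inv
  have hm'lt : m' < n := ZMod.val_lt _
  have hm'1 : 1 ≤ m' := by
    by_contra h
    have h0 : m' = 0 := by omega
    rw [h0, Nat.cast_zero, mul_zero] at hmm'
    exact zero_ne_one hmm'
  obtain ⟨r, hr⟩ := hne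
  have hmodd : m % 2 = 1 := by
    have h2 : ¬ (2 ∣ m) := by
      intro hdvd
      have hg : 2 ∣ Nat.gcd m n := Nat.dvd_gcd hdvd ⟨r, by omega⟩
      have := hcop
      rw [Nat.Coprime] at this
      omega
    omega
  have hm'odd : m' % 2 = 1 := by
    have h1 : ((m * m' : ℕ) : ZMod n) = ((1 : ℕ) : ZMod n) := by
      push_cast
      rw [hmm']
    have h2 : m * m' % n = 1 % n := (ZMod.natCast_eq_natCast_iff _ _ _).mp h1
    have h3 : 1 % n = 1 := Nat.mod_eq_of_lt (by omega)
    have h5 : n * (m * m' / n) + m * m' % n = m * m' := Nat.div_add_mod _ _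
    have h6 : n * (m * m' / n) = 2 * (r * (m * m' / n)) := by rw [hr]; ring
    have h7 : (m * m') % 2 = 1 := by omega
    rcases Nat.even_or_odd m' with he | ho
    · exfalso
      obtain ⟨t, ht⟩ := he
      have h8 : m * m' = 2 * (m * t) := by rw [ht]; ring
      omega
    · exact Nat.odd_iff.mp ho
  have hu : IsUnit ((m : ℕ) : ZMod n) := IsUnit.of_mul_eq_one _ hmm'
  have hu' : IsUnit ((m' : ℕ) : ZMod n) :=
    IsUnit.of_mul_eq_one _ (by rw [mul_comm]; exact hmm')
  set A := christoffel n m (0 : ZMod 2) 1 with hAdef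
  set B := christoffel n m' (0 : ZMod 2) 1 with hBdef
  have hrowA : ∀ i, ∑ k, A i k = 1 := fun i => by
    rw [hAdef, rowsum (le_of_lt hm) hu i, cast_sub_eq_one ⟨r, hr⟩ hmodd hm]
  have hrowB : ∀ i, ∑ k, B i k = 1 := fun i => by
    rw [hBdef, rowsum (le_of_lt hm'lt) hu' i, cast_sub_eq_one ⟨r, hr⟩ hm'odd hm'lt]
  have hcolA : ∀ k, ∑ i, A i k = 1 := fun k => by
    rw [hAdef, colsum (le_of_lt hm) k, cast_sub_eq_one ⟨r, hr⟩ hmodd hm]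
  have hcolB : ∀ k, ∑ i, B i k = 1 := fun k => by
    rw [hBdef, colsum (le_of_lt hm'lt) k, cast_sub_eq_one ⟨r, hr⟩ hm'odd hm'lt]
  set P := A * B with hPdef
  have hstep : ∀ (i k : Fin n),
      P (i + 1) k + (1 : Matrix (Fin n) (Fin n) (ZMod 2)) (i + 1) k
        = P i k + (1 : Matrix (Fin n) (Fin n) (ZMod 2)) i k := by
    intro i k
    have hk := key (n := n) (by omega) hm1 hm hm'1 hm'lt hmm' i k
    rw [← hAdef, ← hBdef, ← hPdef] at hk
    rw [Matrix.one_apply, Matrix.one_apply]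
    have hself : ∀ x : ZMod 2, x + x = 0 := by decide
    have hzero : (P (i + 1) k + (if i + 1 = k then (1 : ZMod 2) else 0))
        + (P i k + (if i = k then (1 : ZMod 2) else 0)) = 0 := by
      calc (P (i + 1) k + (if i + 1 = k then (1 : ZMod 2) else 0))
            + (P i k + (if i = k then (1 : ZMod 2) else 0))
          = (P (i + 1) k + P i k)
            + ((if i + 1 = k then (1 : ZMod 2) else 0) + (if i = k then (1 : ZMod 2) else 0)) := by
            ring
        _ = ((if i + 1 = k then (1 : ZMod 2) else 0) + (if i = k then (1 : ZMod 2) else 0))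
            + ((if i + 1 = k then (1 : ZMod 2) else 0) + (if i = k then (1 : ZMod 2) else 0)) := by
            rw [hk]
        _ = 0 := hself _
    have himp : ∀ x y : ZMod 2, x + y = 0 → x = y := by decide
    exact himp _ _ hzero
  have hone : ((1 : Fin n) : ℕ) = 1 := by
    rw [Fin.val_one']; exact Nat.mod_eq_of_lt (by omega)
  have hconst' : ∀ v (hv : v < n) (k : Fin n),
      P ⟨v, hv⟩ k + (1 : Matrix (Fin n) (Fin n) (ZMod 2)) ⟨v, hv⟩ k
        = P 0 k + (1 : Matrix (Fin n) (Fin n) (ZMod 2)) 0 k := by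
    intro v
    induction v with
    | zero => intro hv k; rfl
    | succ v ih =>
      intro hv k
      have hv' : v < n := by omega
      have hfin : (⟨v + 1, hv⟩ : Fin n) = (⟨v, hv'⟩ : Fin n) + 1 := by
        apply Fin.ext
        rw [Fin.val_add, hone]
        exact (Nat.mod_eq_of_lt hv).symm
      rw [hfin, hstep _ k, ih hv' k]
  set Q := P + 1 with hQdef
  have hQapp : ∀ i k, Q i k = P i k + (1 : Matrix (Fin n) (Fin n) (ZMod 2)) i k :=
    fun i k => rfl
  have hQconst : ∀ i k, Q i k = Q 0 k := by
    intro i k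
    rw [hQapp, hQapp]
    have := hconst' i.val i.isLt k
    simpa using this
  have hrowP : ∑ k, P 0 k = 1 := by
    have h1 : ∀ k : Fin n, P 0 k = ∑ j, A 0 j * B j k := fun k => Matrix.mul_apply
    rw [Finset.sum_congr rfl (fun k _ => h1 k), Finset.sum_comm]
    have h2 : ∀ j : Fin n, ∑ k, A 0 j * B j k = A 0 j := fun j => by
      rw [← Finset.mul_sum, hrowB j, mul_one]
    rw [Finset.sum_congr rfl (fun j _ => h2 j), hrowA 0]
  have hrowe : ∑ k : Fin n, (1 : Matrix (Fin n) (Fin n) (ZMod 2)) 0 k = 1 := by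
    simp [Matrix.one_apply]
  have hrowQ : ∑ k, Q 0 k = 0 := by
    rw [Finset.sum_congr rfl (fun k _ => hQapp 0 k), Finset.sum_add_distrib, hrowP, hrowe]
    decide
  have hQQ : Q * Q = 0 := by
    ext i k
    rw [Matrix.mul_apply, Matrix.zero_apply]
    have h1 : ∀ j : Fin n, Q i j * Q j k = Q 0 j * Q 0 k := fun j => by
      rw [hQconst i j, hQconst j k]
    rw [Finset.sum_congr rfl (fun j _ => h1 j), ← Finset.sum_mul, hrowQ, zero_mul]
  have hPP : P * P = 1 := by
    have hP : P = Q + 1 := by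
      rw [hQdef, add_assoc, add_self_mat (1 : Matrix (Fin n) (Fin n) (ZMod 2)), add_zero]
    have hexp : (Q + 1) * (Q + 1) = Q * Q + Q + Q + 1 := by noncomm_ring
    rw [hP, hexp, hQQ, zero_add, add_self_mat, zero_add]
  have hA : IsUnit A.det := by
    apply Matrix.isUnit_det_of_right_inverse (B := B * P)
    rw [← mul_assoc]
    exact hPP
  have hJA : IsUnit (Jmat n + A).det := by
    apply Matrix.isUnit_det_of_right_inverse (B := (Jmat n + B) * P)
    rw [← mul_assoc]
    have hprod : (Jmat n + A) * (Jmat n + B) = P := by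
      rw [add_mul, mul_add, mul_add, J_mul_J ⟨r, hr⟩, J_mul_of_colsum hcolB,
        mul_J_of_rowsum hrowA, zero_add, ← add_assoc, add_self_mat, zero_add]
    rw [hprod]
    exact hPP
  have hab' : (a = 0 ∧ b = 1) ∨ (a = 1 ∧ b = 0) := by
    have hd : ∀ x y : ZMod 2, x ≠ y → (x = 0 ∧ y = 1) ∨ (x = 1 ∧ y = 0) := by decide
    exact hd a b hab
  rcases hab' with ⟨ha, hb⟩ | ⟨ha, hb⟩
  · rw [ha, hb]; exact hA
  · rw [ha, hb, christoffel_swap m]; exact hJA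

lemma val_zero_fin [NeZero n] : (((0 : Fin n) : ℕ) : ZMod n) = 0 := by
  have : ((0 : Fin n) : ℕ) = 0 := rfl
  rw [this, Nat.cast_zero]

lemma entry_a [NeZero n] {m : ℕ} (hm1 : 1 ≤ m) (a b : ZMod 2) :
    christoffel n m a b 0 0 = a := by
  show (if ((((0 : Fin n) : ℕ) : ZMod n)
      - (m : ZMod n) * (((0 : Fin n) : ℕ) : ZMod n)).val < m then a else b) = a
  rw [val_zero_fin, mul_zero, sub_zero, ZMod.val_zero]
  exact if_pos (by omega)

lemma entry_col0 [NeZero n] {m : ℕ} (a b : ZMod 2) (v : ℕ) (hv : v < n) :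
    christoffel n m a b ⟨v, hv⟩ 0 = if v < m then a else b := by
  show (if ((((⟨v, hv⟩ : Fin n) : ℕ) : ZMod n)
      - (m : ZMod n) * (((0 : Fin n) : ℕ) : ZMod n)).val < m then a else b) = _
  rw [val_zero_fin, mul_zero, sub_zero]
  have : ((⟨v, hv⟩ : Fin n) : ℕ) = v := rfl
  rw [this, ZMod.val_cast_of_lt hv]

lemma chr_inj [NeZero n] {m m₂ : ℕ} {a b : ZMod 2} (hab : a ≠ b) (hm : m < n) (hm₂ : m₂ < n)
    (h : christoffel n m a b = christoffel n m₂ a b) : m = m₂ := by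
  by_contra hne
  rcases Nat.lt_or_ge m m₂ with hlt | hge
  · have h2 := congrFun (congrFun h ⟨m, hm⟩) 0
    rw [entry_col0 a b m hm, entry_col0 a b m hm, if_neg (lt_irrefl m), if_pos hlt] at h2
    exact hab h2.symm
  · have hlt : m₂ < m := by omega
    have h2 := congrFun (congrFun h ⟨m₂, hm₂⟩) 0
    rw [entry_col0 a b m₂ hm₂, entry_col0 a b m₂ hm₂, if_pos hlt, if_neg (lt_irrefl m₂)] at h2
    exact hab h2

lemma ncard_S (hn : 2 < n) (hne : Even n) :
    {A : Matrix (Fin n) (Fin n) (ZMod 2) | IsChristoffel n A ∧ IsUnit A.det}.ncard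
      = 2 * Nat.totient n := by
  haveI : NeZero n := ⟨by omega⟩
  classical
  set T : Finset (ℕ × Bool) := ((Finset.range n).filter n.Coprime) ×ˢ (Finset.univ : Finset Bool)
    with hT
  set f : ℕ × Bool → Matrix (Fin n) (Fin n) (ZMod 2) :=
    fun p => if p.2 then christoffel n p.1 (0 : ZMod 2) 1 else christoffel n p.1 (1 : ZMod 2) 0
    with hf
  have hmemT : ∀ p ∈ T, 1 ≤ p.1 ∧ p.1 < n ∧ Nat.Coprime p.1 n := by
    intro p hp
    rw [hT, Finset.mem_product, Finset.mem_filter, Finset.mem_range] at hp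
    obtain ⟨⟨h1, h2⟩, -⟩ := hp
    have h3 : p.1 ≠ 0 := by
      rintro h0
      rw [h0, Nat.coprime_zero_right] at h2
      omega
    exact ⟨by omega, h1, h2.symm⟩
  have hTmem' : ∀ m : ℕ, 1 ≤ m → m < n → Nat.Coprime m n → ∀ s : Bool, (m, s) ∈ T := by
    intro m h1 h2 h3 s
    rw [hT, Finset.mem_product, Finset.mem_filter, Finset.mem_range]
    exact ⟨⟨h2, h3.symm⟩, Finset.mem_univ s⟩
  have hset : {A : Matrix (Fin n) (Fin n) (ZMod 2) | IsChristoffel n A ∧ IsUnit A.det}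
      = ↑(T.image f) := by
    ext M
    simp only [Set.mem_setOf_eq, Finset.coe_image, Set.mem_image, Finset.mem_coe]
    constructor
    · rintro ⟨⟨m, a, b, hm1, hm, hcop, hab, rfl⟩, -⟩
      have hd : ∀ x y : ZMod 2, x ≠ y → (x = 0 ∧ y = 1) ∨ (x = 1 ∧ y = 0) := by decide
      rcases hd a b hab with ⟨ha, hb⟩ | ⟨ha, hb⟩
      · exact ⟨(m, true), hTmem' m hm1 hm hcop true, by rw [hf]; simp only [if_true]; rw [ha, hb]⟩
      · exact ⟨(m, false), hTmem' m hm1 hm hcop false,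
          by rw [hf]; simp only [Bool.false_eq_true, if_false]; rw [ha, hb]⟩
    · rintro ⟨p, hp, rfl⟩
      obtain ⟨h1, h2, h3⟩ := hmemT p hp
      obtain ⟨m, s⟩ := p
      constructor
      · cases s
        · exact ⟨m, 1, 0, h1, h2, h3, by decide, rfl⟩
        · exact ⟨m, 0, 1, h1, h2, h3, by decide, rfl⟩
      · cases s
        · exact isUnit_det hn hne h1 h2 h3 1 0 (by decide)
        · exact isUnit_det hn hne h1 h2 h3 0 1 (by decide)
  have hinj : Set.InjOn f ↑T := by
    intro p hp q hq hfpq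
    obtain ⟨hp1, hp2, hp3⟩ := hmemT p (Finset.mem_coe.mp hp)
    obtain ⟨hq1, hq2, hq3⟩ := hmemT q (Finset.mem_coe.mp hq)
    obtain ⟨m, s⟩ := p
    obtain ⟨m₂, s₂⟩ := q
    simp only at hp1 hp2 hp3 hq1 hq2 hq3
    have h00 := congrFun (congrFun hfpq 0) 0
    have hfv : ∀ (m₃ : ℕ) (s₃ : Bool), 1 ≤ m₃ →
        f (m₃, s₃) 0 0 = if s₃ then (0 : ZMod 2) else 1 := by
      intro m₃ s₃ hm₃
      cases s₃
      · simp only [hf, Bool.false_eq_true, if_false]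
        exact entry_a hm₃ 1 0
      · simp only [hf, if_true]
        exact entry_a hm₃ 0 1
    rw [hfv m s hp1, hfv m₂ s₂ hq1] at h00
    have hs : s = s₂ := by
      cases s <;> cases s₂ <;> first | rfl | (exfalso; revert h00; decide)
    subst hs
    have hmeq : m = m₂ := by
      cases s
      · simp only [hf, Bool.false_eq_true, if_false] at hfpq
        exact chr_inj (by decide) hp2 hq2 hfpq
      · simp only [hf, if_true] at hfpq
        exact chr_inj (by decide) hp2 hq2 hfpq
    rw [hmeq]
  rw [hset, Set.ncard_coe_finset, Finset.card_image_of_injOn hinj, hT, Finset.card_product]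
  rw [Finset.card_univ, Fintype.card_bool]
  rw [Nat.totient]
  ring

lemma chr_one_eq (hn : 2 < n) : christoffel n 1 (0 : ZMod 2) 1 = Jmat n + 1 := by
  haveI : NeZero n := ⟨by omega⟩
  ext i j
  show (if (((i : ℕ) : ZMod n) - ((1 : ℕ) : ZMod n) * ((j : ℕ) : ZMod n)).val < 1
      then (0 : ZMod 2) else 1) = Jmat n i j + (1 : Matrix (Fin n) (Fin n) (ZMod 2)) i j
  rw [Nat.cast_one, one_mul, show Jmat n i j = 1 from rfl, Matrix.one_apply]
  have h1 : (((i : ℕ) : ZMod n) - ((j : ℕ) : ZMod n)).val < 1 ↔ i = j := by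
    rw [Nat.lt_one_iff, ZMod.val_eq_zero, sub_eq_zero, cast_inj]
  rw [if_congr h1 rfl rfl]
  by_cases h : i = j
  · rw [if_pos h, if_pos h]; decide
  · rw [if_neg h, if_neg h]; decide

lemma neg_one_cast (hn : 2 < n) [NeZero n] : ((n - 1 : ℕ) : ZMod n) = -1 := by
  rw [Nat.cast_sub (by omega), Nat.cast_one, ZMod.natCast_self, zero_sub]

lemma chr_rev_eq (hn : 2 < n) [NeZero n] (i j : Fin n) :
    christoffel n (n - 1) (0 : ZMod 2) 1 i j
      = if ((i : ℕ) : ZMod n) + ((j : ℕ) : ZMod n) = -1 then 1 else 0 := by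
  show (if (((i : ℕ) : ZMod n) - ((n - 1 : ℕ) : ZMod n) * ((j : ℕ) : ZMod n)).val < n - 1
      then (0 : ZMod 2) else 1) = _
  rw [neg_one_cast hn]
  have he : ((i : ℕ) : ZMod n) - (-1) * ((j : ℕ) : ZMod n)
      = ((i : ℕ) : ZMod n) + ((j : ℕ) : ZMod n) := by ring
  rw [he]
  set x := ((i : ℕ) : ZMod n) + ((j : ℕ) : ZMod n) with hx
  have hxlt : x.val < n := ZMod.val_lt x
  have hiff : x = -1 ↔ x.val = n - 1 := by
    rw [← neg_one_cast hn, val_eq_iff _ _ (by omega)]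
  by_cases h : x = -1
  · rw [if_pos h]
    rw [hiff] at h
    rw [if_neg (by omega)]
  · rw [if_neg h]
    have h2 : x.val ≠ n - 1 := fun hh => h (hiff.mpr hh)
    rw [if_pos (by omega)]

lemma rev_sq (hn : 2 < n) [NeZero n] :
    christoffel n (n - 1) (0 : ZMod 2) 1 * christoffel n (n - 1) (0 : ZMod 2) 1 = 1 := by
  ext i k
  rw [Matrix.mul_apply, Matrix.one_apply]
  have h1 : ∀ j : Fin n, christoffel n (n - 1) (0 : ZMod 2) 1 i j
        * christoffel n (n - 1) (0 : ZMod 2) 1 j k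
      = if ((j : ℕ) : ZMod n) = -1 - ((i : ℕ) : ZMod n)
          then christoffel n (n - 1) (0 : ZMod 2) 1 j k else 0 := by
    intro j
    rw [chr_rev_eq hn i j]
    have hiff : (((i : ℕ) : ZMod n) + ((j : ℕ) : ZMod n) = -1)
        ↔ ((j : ℕ) : ZMod n) = -1 - ((i : ℕ) : ZMod n) := by
      constructor <;> intro h <;> linear_combination h
    rw [if_congr hiff rfl rfl, ite_mul, one_mul, zero_mul]
  rw [Finset.sum_congr rfl (fun j _ => h1 j), sum_cond]
  rw [chr_rev_eq hn]
  rw [show ((((finZMod n).symm (-1 - ((i : ℕ) : ZMod n))) : ℕ) : ZMod n)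
      = -1 - ((i : ℕ) : ZMod n) from by rw [← finZMod_apply, Equiv.apply_symm_apply]]
  have hiff2 : (-1 - ((i : ℕ) : ZMod n) + ((k : ℕ) : ZMod n) = -1) ↔ i = k := by
    rw [← cast_inj (i := i) (j := k)]
    constructor
    · intro h; linear_combination -h
    · intro h; linear_combination -h
  rw [if_congr hiff2 rfl rfl]

lemma rev_rowsum (hn : 2 < n) [NeZero n] (i : Fin n) :
    ∑ k, christoffel n (n - 1) (0 : ZMod 2) 1 i k = 1 := by
  have h1 : ∀ k : Fin n, christoffel n (n - 1) (0 : ZMod 2) 1 i k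
      = if ((k : ℕ) : ZMod n) = -1 - ((i : ℕ) : ZMod n) then (fun _ : Fin n => (1 : ZMod 2)) k
        else 0 := by
    intro k
    rw [chr_rev_eq hn i k]
    refine if_congr ?_ rfl rfl
    constructor <;> intro h <;> linear_combination h
  rw [Finset.sum_congr rfl (fun k _ => h1 k), sum_cond]

lemma rev_colsum (hn : 2 < n) [NeZero n] (k : Fin n) :
    ∑ i, christoffel n (n - 1) (0 : ZMod 2) 1 i k = 1 := by
  have h1 : ∀ i : Fin n, christoffel n (n - 1) (0 : ZMod 2) 1 i k
      = if ((i : ℕ) : ZMod n) = -1 - ((k : ℕ) : ZMod n) then (fun _ : Fin n => (1 : ZMod 2)) i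
        else 0 := by
    intro i
    rw [chr_rev_eq hn i k]
    refine if_congr ?_ rfl rfl
    constructor <;> intro h <;> linear_combination h
  rw [Finset.sum_congr rfl (fun i _ => h1 i), sum_cond]

lemma X1_sq (hn : 2 < n) (hne : Even n) : (christoffel n 1 (0 : ZMod 2) 1) ^ 2 = 1 := by
  rw [chr_one_eq hn, sq]
  have hexp : (Jmat n + 1) * (Jmat n + 1) = Jmat n * Jmat n + (Jmat n + Jmat n) + 1 := by
    noncomm_ring
  rw [hexp, J_mul_J hne, add_self_mat, zero_add, zero_add]

lemma X3_sq (hn : 2 < n) : (christoffel n (n - 1) (0 : ZMod 2) 1) ^ 2 = 1 := by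
  haveI : NeZero n := ⟨by omega⟩
  rw [sq]
  exact rev_sq hn

lemma X2_sq (hn : 2 < n) (hne : Even n) : (christoffel n (n - 1) (1 : ZMod 2) 0) ^ 2 = 1 := by
  haveI : NeZero n := ⟨by omega⟩
  rw [christoffel_swap, sq]
  set R := christoffel n (n - 1) (0 : ZMod 2) 1 with hR
  have hexp : (Jmat n + R) * (Jmat n + R)
      = Jmat n * Jmat n + (Jmat n * R + R * Jmat n) + R * R := by noncomm_ring
  rw [hexp, J_mul_J hne, J_mul_of_colsum (rev_colsum hn), mul_J_of_rowsum (rev_rowsum hn),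
    add_self_mat, rev_sq hn, zero_add, zero_add]

lemma half_of_dvd {d j : ℕ} (hdvd : d ∣ 2 * j) (hndvd : ¬ d ∣ j) : 2 * (j % d) = d := by
  have hd0 : d ≠ 0 := by
    rintro rfl
    rw [Nat.zero_dvd] at hdvd
    exact hndvd (by rw [Nat.zero_dvd]; omega)
  have hmod := Nat.div_add_mod j d
  have h2 : d ∣ 2 * (j % d) := by
    have h4 : d ∣ 2 * (d * (j / d)) := ⟨2 * (j / d), by ring⟩
    have h6 := Nat.dvd_sub hdvd h4
    have h5 : 2 * j - 2 * (d * (j / d)) = 2 * (j % d) := by omega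
    rwa [h5] at h6
  obtain ⟨c, hc⟩ := h2
  have hlt : j % d < d := Nat.mod_lt _ (by omega)
  rcases (by omega : c = 0 ∨ c = 1 ∨ 2 ≤ c) with h | h | h
  · exfalso
    rw [h, mul_zero] at hc
    exact hndvd (Nat.dvd_of_mod_eq_zero (by omega))
  · rw [h, mul_one] at hc
    omega
  · exfalso
    have h7 : d * 2 ≤ d * c := Nat.mul_le_mul_left d h
    omega

lemma not_cyclic_aux {M : Type*} [Monoid M] (A X₁ X₂ : M) (h1 : X₁ ^ 2 = 1) (h2 : X₂ ^ 2 = 1)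
    (hX1 : X₁ ≠ 1) (hX2 : X₂ ≠ 1) (hne : X₁ ≠ X₂) (j₁ j₂ : ℕ)
    (e1 : X₁ = A ^ j₁) (e2 : X₂ = A ^ j₂) : False := by
  have hdvd1 : orderOf A ∣ 2 * j₁ :=
    orderOf_dvd_of_pow_eq_one (by rw [mul_comm, pow_mul, ← e1, h1])
  have hndvd1 : ¬ orderOf A ∣ j₁ := fun h =>
    hX1 (by rw [e1, orderOf_dvd_iff_pow_eq_one.mp h])
  have hdvd2 : orderOf A ∣ 2 * j₂ :=
    orderOf_dvd_of_pow_eq_one (by rw [mul_comm, pow_mul, ← e2, h2])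
  have hndvd2 : ¬ orderOf A ∣ j₂ := fun h =>
    hX2 (by rw [e2, orderOf_dvd_iff_pow_eq_one.mp h])
  have g1 := half_of_dvd hdvd1 hndvd1
  have g2 := half_of_dvd hdvd2 hndvd2
  have hmt : j₁ % orderOf A = j₂ % orderOf A := by omega
  exact hne (by rw [e1, e2, ← pow_mod_orderOf, hmt, pow_mod_orderOf])

lemma isUnit_det_of_sq {M : Matrix (Fin n) (Fin n) (ZMod 2)} (h : M ^ 2 = 1) :
    IsUnit M.det :=
  Matrix.isUnit_det_of_right_inverse (B := M) (by rw [← sq]; exact h)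

end ChristoffelAux

open ChristoffelAux in
theorem christoffel_group_F2_even (n : ℕ) (hn : 2 < n) (hne : Even n) :
    let S : Set (Matrix (Fin n) (Fin n) (ZMod 2)) := {A | IsChristoffel n A ∧ IsUnit A.det}
    S.ncard = 2 * Nat.totient n ∧
    (christoffel n 1 (0 : ZMod 2) 1 ≠ christoffel n (n - 1) (1 : ZMod 2) 0 ∧
      christoffel n 1 (0 : ZMod 2) 1 ≠ christoffel n (n - 1) (0 : ZMod 2) 1 ∧
      christoffel n (n - 1) (1 : ZMod 2) 0 ≠ christoffel n (n - 1) (0 : ZMod 2) 1) ∧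
    (christoffel n 1 (0 : ZMod 2) 1 ≠ 1 ∧ (christoffel n 1 (0 : ZMod 2) 1) ^ 2 = 1) ∧
    (christoffel n (n - 1) (1 : ZMod 2) 0 ≠ 1 ∧ (christoffel n (n - 1) (1 : ZMod 2) 0) ^ 2 = 1) ∧
    (christoffel n (n - 1) (0 : ZMod 2) 1 ≠ 1 ∧ (christoffel n (n - 1) (0 : ZMod 2) 1) ^ 2 = 1) ∧
    ¬ ∃ A ∈ S, ∀ B ∈ S, ∃ j : ℕ, B = A ^ j := by
  intro S
  haveI : NeZero n := ⟨by omega⟩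
  have h1n : 1 ≤ n - 1 := by omega
  have hn1lt : n - 1 < n := by omega
  have hcop1 : Nat.Coprime 1 n := Nat.coprime_one_left n
  have hcopn1 : Nat.Coprime (n - 1) n := by
    have h1 : Nat.Coprime (n - 1) (n - 1 + 1) := by simp
    rwa [show n - 1 + 1 = n by omega] at h1
  set i1 : Fin n := ⟨1, by omega⟩ with hi1
  have h0ne : (0 : Fin n) ≠ i1 := by
    intro h
    have h2 : ((0 : Fin n) : ℕ) = (i1 : ℕ) := congrArg Fin.val h
    have h3 : ((0 : Fin n) : ℕ) = 0 := rfl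
    have h4 : (i1 : ℕ) = 1 := rfl
    omega
  have hX1_00 : christoffel n 1 (0 : ZMod 2) 1 0 0 = 0 := entry_a (le_refl 1) 0 1
  have hX2_00 : christoffel n (n - 1) (1 : ZMod 2) 0 0 0 = 1 := entry_a h1n 1 0
  have hX3_00 : christoffel n (n - 1) (0 : ZMod 2) 1 0 0 = 0 := entry_a h1n 0 1
  have hR_01 : christoffel n (n - 1) (0 : ZMod 2) 1 0 i1 = 0 := by
    rw [chr_rev_eq hn]
    rw [val_zero_fin, show ((i1 : ℕ) : ZMod n) = 1 from by rw [show (i1 : ℕ) = 1 from rfl, Nat.cast_one], zero_add]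
    refine if_neg ?_
    intro h
    have h2 : ((2 : ℕ) : ZMod n) = 0 := by push_cast; linear_combination h
    rw [ZMod.natCast_eq_zero_iff] at h2
    have := Nat.le_of_dvd (by norm_num) h2
    omega
  have hX1_01 : christoffel n 1 (0 : ZMod 2) 1 0 i1 = 1 := by
    rw [chr_one_eq hn, Matrix.add_apply, show Jmat n 0 i1 = 1 from rfl,
      Matrix.one_apply_ne h0ne, add_zero]
  have hX2_01 : christoffel n (n - 1) (1 : ZMod 2) 0 0 i1 = 1 := by
    rw [christoffel_swap, Matrix.add_apply, show Jmat n 0 i1 = 1 from rfl, hR_01, add_zero]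
  have hone00 : (1 : Matrix (Fin n) (Fin n) (ZMod 2)) 0 0 = 1 := Matrix.one_apply_eq 0
  have hone01 : (1 : Matrix (Fin n) (Fin n) (ZMod 2)) 0 i1 = 0 := Matrix.one_apply_ne h0ne
  have hd12 : christoffel n 1 (0 : ZMod 2) 1 ≠ christoffel n (n - 1) (1 : ZMod 2) 0 := by
    intro h
    have h2 := congrFun (congrFun h 0) 0
    rw [hX1_00, hX2_00] at h2
    exact (by decide : (0 : ZMod 2) ≠ 1) h2
  have hd13 : christoffel n 1 (0 : ZMod 2) 1 ≠ christoffel n (n - 1) (0 : ZMod 2) 1 := by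
    intro h
    have h2 := congrFun (congrFun h 0) i1
    rw [hX1_01, hR_01] at h2
    exact (by decide : (1 : ZMod 2) ≠ 0) h2
  have hd23 : christoffel n (n - 1) (1 : ZMod 2) 0 ≠ christoffel n (n - 1) (0 : ZMod 2) 1 := by
    intro h
    have h2 := congrFun (congrFun h 0) 0
    rw [hX2_00, hX3_00] at h2
    exact (by decide : (1 : ZMod 2) ≠ 0) h2
  have hn1 : christoffel n 1 (0 : ZMod 2) 1 ≠ 1 := by
    intro h
    have h2 := congrFun (congrFun h 0) 0
    rw [hX1_00, hone00] at h2
    exact (by decide : (0 : ZMod 2) ≠ 1) h2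
  have hn2 : christoffel n (n - 1) (1 : ZMod 2) 0 ≠ 1 := by
    intro h
    have h2 := congrFun (congrFun h 0) i1
    rw [hX2_01, hone01] at h2
    exact (by decide : (1 : ZMod 2) ≠ 0) h2
  have hn3 : christoffel n (n - 1) (0 : ZMod 2) 1 ≠ 1 := by
    intro h
    have h2 := congrFun (congrFun h 0) 0
    rw [hX3_00, hone00] at h2
    exact (by decide : (0 : ZMod 2) ≠ 1) h2
  refine ⟨ncard_S hn hne, ⟨hd12, hd13, hd23⟩, ⟨hn1, X1_sq hn hne⟩, ⟨hn2, X2_sq hn hne⟩,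
    ⟨hn3, X3_sq hn⟩, ?_⟩
  rintro ⟨A, hAS, hgen⟩
  have hX1S : christoffel n 1 (0 : ZMod 2) 1 ∈ S :=
    ⟨⟨1, 0, 1, le_refl 1, by omega, hcop1, by decide, rfl⟩, isUnit_det_of_sq (X1_sq hn hne)⟩
  have hX2S : christoffel n (n - 1) (1 : ZMod 2) 0 ∈ S :=
    ⟨⟨n - 1, 1, 0, h1n, hn1lt, hcopn1, by decide, rfl⟩, isUnit_det_of_sq (X2_sq hn hne)⟩
  obtain ⟨j₁, hj₁⟩ := hgen _ hX1S
  obtain ⟨j₂, hj₂⟩ := hgen _ hX2S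
  exact not_cyclic_aux A _ _ (X1_sq hn hne) (X2_sq hn hne) hn1 hn2 hd12 j₁ j₂ hj₁ hj₂
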